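/- For all m, n, k ∈ ℕ, the dual DP color function of the complete bipartite graph K_{m,n} equals its chromatic polynomial: P*_DP(K_{m,n}, k) = P(K_{m,n}, k). -/

import Mathlib

open scoped Classical

/-- Number of proper `k`-colorings of `G` (the chromatic polynomial evaluated at `k`). -/
noncomputable def properCount {V : Type*} (G : SimpleGraph V) (k : ℕ) : ℕ :=
  Nat.card {f : V → Fin k // ∀ u v, G.Adj u v → f u ≠ f v}

/-- Number of proper `L`-colorings of `G` for a list assignment `L`. -/
noncomputable def listCount {V : Type*} (G : SimpleGraph V) (L : V → Finset ℕ) : ℕ :=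
  Nat.card {f : V → ℕ // (∀ v, f v ∈ L v) ∧ ∀ u v, G.Adj u v → f u ≠ f v}

/-- The list color function `P_ℓ(G, k)`. -/
noncomputable def listColorFn {V : Type*} (G : SimpleGraph V) (k : ℕ) : ℕ :=
  sInf {m | ∃ L : V → Finset ℕ, (∀ v, (L v).card = k) ∧ m = listCount G L}

/-- `H` (on vertex set `V × Fin k`, with `L v = {v} × Fin k`) is a `k`-fold DP-cover of `G`:
each part is a clique, cross-edges only between parts of adjacent vertices, and the
cross-edges between parts of adjacent vertices form a matching. -/
def IsDPCover {V : Type*} (G : SimpleGraph V) (k : ℕ) (H : SimpleGraph (V × Fin k)) : Prop :=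
  (∀ v : V, ∀ i j : Fin k, i ≠ j → H.Adj (v, i) (v, j)) ∧
  (∀ u v : V, ∀ i j : Fin k, H.Adj (u, i) (v, j) → u = v ∨ G.Adj u v) ∧
  (∀ u v : V, G.Adj u v →
    (∀ i j j' : Fin k, H.Adj (u, i) (v, j) → H.Adj (u, i) (v, j') → j = j') ∧
    (∀ i i' j : Fin k, H.Adj (u, i) (v, j) → H.Adj (u, i') (v, j) → i = i'))

/-- A full `k`-fold DP-cover: the matching between the parts of adjacent vertices is perfect. -/
def IsFullDPCover {V : Type*} (G : SimpleGraph V) (k : ℕ) (H : SimpleGraph (V × Fin k)) : Prop :=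
  IsDPCover G k H ∧ ∀ u v : V, G.Adj u v → ∀ i : Fin k, ∃! j : Fin k, H.Adj (u, i) (v, j)

/-- The number of `H`-colorings of `G` (independent sets of `H` with one vertex in each part,
encoded as functions `V → Fin k`). -/
noncomputable def dpCount {V : Type*} (k : ℕ) (H : SimpleGraph (V × Fin k)) : ℕ :=
  Nat.card {f : V → Fin k // ∀ u v : V, u ≠ v → ¬ H.Adj (u, f u) (v, f v)}

/-- The DP color function `P_DP(G, k)`. -/
noncomputable def dpColorFn {V : Type*} (G : SimpleGraph V) (k : ℕ) : ℕ :=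
  sInf {m | ∃ H : SimpleGraph (V × Fin k), IsDPCover G k H ∧ m = dpCount k H}

/-- The dual DP color function `P*_DP(G, k)`. -/
noncomputable def dualDPColorFn {V : Type*} (G : SimpleGraph V) (k : ℕ) : ℕ :=
  sSup {m | ∃ H : SimpleGraph (V × Fin k), IsFullDPCover G k H ∧ m = dpCount k H}


open Finset

-- AM-GM for naturals
private lemma nat_amgm (n : ℕ) (y : Fin n → ℕ) :
    n * ∏ b, y b ≤ ∑ b, (y b) ^ n := by
  rcases Nat.eq_zero_or_pos n with rfl | hn
  · simp
  have key : (n : ℝ) * ∏ b, (y b : ℝ) ≤ ∑ b, ((y b : ℝ)) ^ n := by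
    have hw : ∑ _i : Fin n, (n : ℝ)⁻¹ = 1 := by
      simp [Finset.card_univ]
      field_simp
    have h := Real.geom_mean_le_arith_mean_weighted Finset.univ
      (fun _ : Fin n => (n : ℝ)⁻¹) (fun b => ((y b : ℝ)) ^ n)
      (fun i _ => by positivity) hw (fun i _ => by positivity)
    have hL : ∏ b : Fin n, (((y b : ℝ)) ^ n) ^ ((n : ℝ)⁻¹) = ∏ b : Fin n, (y b : ℝ) := by
      refine Finset.prod_congr rfl fun b _ => ?_
      rw [← Real.rpow_natCast ((y b : ℝ)) n, ← Real.rpow_mul (by positivity),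
        mul_inv_cancel₀ (by positivity), Real.rpow_one]
    rw [hL] at h
    calc (n : ℝ) * ∏ b, (y b : ℝ) ≤ (n : ℝ) * ∑ b, (n : ℝ)⁻¹ * ((y b : ℝ)) ^ n := by
          apply mul_le_mul_of_nonneg_left h (by positivity)
      _ = ∑ b, ((y b : ℝ)) ^ n := by
          rw [← Finset.mul_sum, ← mul_assoc, mul_inv_cancel₀ (by positivity), one_mul]
  exact_mod_cast key

-- counting formula
private lemma count_eq (m n k : ℕ) (T : Fin m → Fin n → Fin k → Fin k) :
    Nat.card {p : (Fin m → Fin k) × (Fin n → Fin k) // ∀ a b, p.2 b ≠ T a b (p.1 a)} =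
      ∑ g : Fin m → Fin k, ∏ b : Fin n,
        (k - (Finset.univ.image fun a => T a b (g a)).card) := by
  rw [Nat.card_eq_fintype_card]
  rw [Fintype.card_congr (Equiv.subtypeProdEquivSigmaSubtype
    (fun (g : Fin m → Fin k) (h : Fin n → Fin k) => ∀ a b, h b ≠ T a b (g a)))]
  rw [Fintype.card_sigma]
  refine Finset.sum_congr rfl fun g _ => ?_
  have e2 : {h : Fin n → Fin k // ∀ a b, h b ≠ T a b (g a)} ≃
      ∀ b : Fin n, {c : Fin k // c ∉ (Finset.univ.image fun a => T a b (g a))} := by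
    refine (Equiv.subtypeEquivRight fun h => ?_).trans Equiv.subtypePiEquivPi
    constructor
    · intro hh b hb
      simp only [Finset.mem_image, Finset.mem_univ, true_and] at hb
      obtain ⟨a, ha⟩ := hb
      exact hh a b ha.symm
    · intro hh a b heq
      exact hh b (Finset.mem_image.2 ⟨a, Finset.mem_univ a, heq.symm⟩)
  rw [Fintype.card_congr e2, Fintype.card_pi]
  refine Finset.prod_congr rfl fun b _ => ?_
  rw [Fintype.card_subtype_compl]
  congr 1
  · simp
  · simp [Fintype.card_subtype]

private lemma main_ineq (m n k : ℕ) (T : Fin m → Fin n → Fin k → Fin k)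
    (hT : ∀ a b, Function.Bijective (T a b)) :
    ∑ g : Fin m → Fin k, ∏ b : Fin n, (k - (Finset.univ.image fun a => T a b (g a)).card)
      ≤ ∑ g : Fin m → Fin k, (k - (Finset.univ.image fun a => g a).card) ^ n := by
  rcases Nat.eq_zero_or_pos n with rfl | hn
  · simp
  refine Nat.le_of_mul_le_mul_left ?_ hn
  calc n * ∑ g : Fin m → Fin k, ∏ b : Fin n,
          (k - (Finset.univ.image fun a => T a b (g a)).card)
      = ∑ g : Fin m → Fin k, n * ∏ b : Fin n,
          (k - (Finset.univ.image fun a => T a b (g a)).card) := Finset.mul_sum ..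
    _ ≤ ∑ g : Fin m → Fin k, ∑ b : Fin n,
          (k - (Finset.univ.image fun a => T a b (g a)).card) ^ n :=
        Finset.sum_le_sum fun g _ => nat_amgm n _
    _ = ∑ b : Fin n, ∑ g : Fin m → Fin k,
          (k - (Finset.univ.image fun a => T a b (g a)).card) ^ n := Finset.sum_comm
    _ = ∑ b : Fin n, ∑ g : Fin m → Fin k,
          (k - (Finset.univ.image fun a => g a).card) ^ n := by
        refine Finset.sum_congr rfl fun b _ => ?_
        have hφ : Function.Bijective (fun (g : Fin m → Fin k) (a : Fin m) => T a b (g a)) := by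
          have : (fun (g : Fin m → Fin k) (a : Fin m) => T a b (g a)) =
              ⇑(Equiv.piCongrRight fun a => Equiv.ofBijective (T a b) (hT a b)) := rfl
          rw [this]; exact (Equiv.piCongrRight _).bijective
        exact Fintype.sum_bijective _ hφ _ _ (fun g => rfl)
    _ = n * ∑ g : Fin m → Fin k, (k - (Finset.univ.image fun a => g a).card) ^ n := by
        rw [Finset.sum_const, Finset.card_univ, Fintype.card_fin, smul_eq_mul]

private def idCover {V : Type*} (G : SimpleGraph V) (k : ℕ) : SimpleGraph (V × Fin k) where
  Adj p q := (p.1 = q.1 ∧ p.2 ≠ q.2) ∨ (G.Adj p.1 q.1 ∧ p.2 = q.2)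
  symm := ⟨fun p q h => by
    rcases h with ⟨h1, h2⟩ | ⟨h1, h2⟩
    · exact Or.inl ⟨h1.symm, h2.symm⟩
    · exact Or.inr ⟨h1.symm, h2.symm⟩⟩
  loopless := ⟨fun p h => by
    rcases h with ⟨_, h2⟩ | ⟨h1, _⟩
    · exact h2 rfl
    · exact G.irrefl h1⟩

private lemma idCover_full {V : Type*} (G : SimpleGraph V) (k : ℕ) :
    IsFullDPCover G k (idCover G k) := by
  refine ⟨⟨fun v i j hij => Or.inl ⟨rfl, hij⟩, fun u v i j h => ?_,
    fun u v huv => ⟨?_, ?_⟩⟩, fun u v huv i => ⟨i, Or.inr ⟨huv, rfl⟩, fun y hy => ?_⟩⟩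
  · rcases h with ⟨h1, _⟩ | ⟨h1, _⟩
    · exact Or.inl h1
    · exact Or.inr h1
  · intro i j j' h1 h2
    rcases h1 with ⟨he, _⟩ | ⟨_, he⟩
    · exact absurd he (G.ne_of_adj huv)
    · rcases h2 with ⟨he', _⟩ | ⟨_, he'⟩
      · exact absurd he' (G.ne_of_adj huv)
      · exact he.symm.trans he'
  · intro i i' j h1 h2
    rcases h1 with ⟨he, _⟩ | ⟨_, he⟩
    · exact absurd he (G.ne_of_adj huv)
    · rcases h2 with ⟨he', _⟩ | ⟨_, he'⟩
      · exact absurd he' (G.ne_of_adj huv)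
      · exact he.trans he'.symm
  · rcases hy with ⟨he, _⟩ | ⟨_, he⟩
    · exact absurd he (G.ne_of_adj huv)
    · exact he.symm

private lemma dpCount_idCover {V : Type*} (G : SimpleGraph V) (k : ℕ) :
    dpCount k (idCover G k) = properCount G k := by
  apply Nat.card_congr
  apply Equiv.subtypeEquivRight
  intro f
  constructor
  · intro h u v huv heq
    exact h u v (G.ne_of_adj huv) (Or.inr ⟨huv, heq⟩)
  · intro h u v huv hadj
    rcases hadj with ⟨h1, _⟩ | ⟨h1, h2⟩
    · exact huv h1
    · exact h u v h1 h2

private lemma properCount_eq (m n k : ℕ) :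
    properCount (completeBipartiteGraph (Fin m) (Fin n)) k =
      ∑ g : Fin m → Fin k, (k - (Finset.univ.image fun a => g a).card) ^ n := by
  have h1 : properCount (completeBipartiteGraph (Fin m) (Fin n)) k =
      Nat.card {p : (Fin m → Fin k) × (Fin n → Fin k) //
        ∀ a b, p.2 b ≠ (fun (c : Fin k) => c) (p.1 a)} := by
    apply Nat.card_congr
    refine Equiv.subtypeEquiv (Equiv.sumArrowEquivProdArrow (Fin m) (Fin n) (Fin k)) fun f => ?_
    constructor
    · intro h a b
      exact h (Sum.inr b) (Sum.inl a) (by simp)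
    · intro h u v hadj
      rcases u with a | b <;> rcases v with a' | b'
      · simp at hadj
      · exact (h a b').symm
      · exact h a' b
      · simp at hadj
  calc properCount (completeBipartiteGraph (Fin m) (Fin n)) k
      = Nat.card {p : (Fin m → Fin k) × (Fin n → Fin k) //
          ∀ a b, p.2 b ≠ (fun (c : Fin k) => c) (p.1 a)} := h1
    _ = ∑ g : Fin m → Fin k, ∏ _b : Fin n,
          (k - (Finset.univ.image fun a => g a).card) := count_eq m n k (fun _ _ c => c)
    _ = ∑ g : Fin m → Fin k, (k - (Finset.univ.image fun a => g a).card) ^ n := by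
        refine Finset.sum_congr rfl fun g _ => ?_
        rw [Finset.prod_const, Finset.card_univ, Fintype.card_fin]

private lemma dpCount_le (m n k : ℕ) (H : SimpleGraph ((Fin m ⊕ Fin n) × Fin k))
    (hH : IsFullDPCover (completeBipartiteGraph (Fin m) (Fin n)) k H) :
    dpCount k H ≤ properCount (completeBipartiteGraph (Fin m) (Fin n)) k := by
  have hadj : ∀ (a : Fin m) (b : Fin n),
      (completeBipartiteGraph (Fin m) (Fin n)).Adj (Sum.inl a) (Sum.inr b) := by simp
  set σ : Fin m → Fin n → Fin k → Fin k :=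
    fun a b i => (hH.2 _ _ (hadj a b) i).choose with hσdef
  have hσ : ∀ a b i j, H.Adj (Sum.inl a, i) (Sum.inr b, j) ↔ σ a b i = j := by
    intro a b i j
    constructor
    · intro h
      exact ((hH.2 _ _ (hadj a b) i).choose_spec.2 j h).symm
    · intro h
      rw [← h]
      exact (hH.2 _ _ (hadj a b) i).choose_spec.1
  have hbij : ∀ a b, Function.Bijective (σ a b) := by
    intro a b
    rw [← Finite.injective_iff_bijective]
    intro i i' he
    exact (hH.1.2.2 _ _ (hadj a b)).2 i i' (σ a b i')
      ((hσ a b i _).mpr he) ((hσ a b i' _).mpr rfl)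
  have h1 : dpCount k H =
      Nat.card {p : (Fin m → Fin k) × (Fin n → Fin k) // ∀ a b, p.2 b ≠ σ a b (p.1 a)} := by
    apply Nat.card_congr
    refine Equiv.subtypeEquiv (Equiv.sumArrowEquivProdArrow (Fin m) (Fin n) (Fin k)) fun f => ?_
    constructor
    · intro h a b heq
      exact h (Sum.inl a) (Sum.inr b) (by simp) ((hσ a b _ _).mpr heq.symm)
    · intro h u v huv hAdjH
      rcases u with a | b <;> rcases v with a' | b'
      · rcases hH.1.2.1 _ _ _ _ hAdjH with he | he
        · exact huv he
        · simp at he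
      · exact h a b' ((hσ a b' _ _).mp hAdjH).symm
      · exact h a' b ((hσ a' b _ _).mp hAdjH.symm).symm
      · rcases hH.1.2.1 _ _ _ _ hAdjH with he | he
        · exact huv he
        · simp at he
  rw [h1, count_eq m n k σ, properCount_eq]
  exact main_ineq m n k σ hbij

theorem stmt8 (m n k : ℕ) :
    dualDPColorFn (completeBipartiteGraph (Fin m) (Fin n)) k =
      properCount (completeBipartiteGraph (Fin m) (Fin n)) k := by
  have hmem : properCount (completeBipartiteGraph (Fin m) (Fin n)) k ∈
      {x | ∃ H : SimpleGraph ((Fin m ⊕ Fin n) × Fin k),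
        IsFullDPCover (completeBipartiteGraph (Fin m) (Fin n)) k H ∧ x = dpCount k H} :=
    ⟨idCover _ k, idCover_full _ k, (dpCount_idCover _ k).symm⟩
  have hub : ∀ x ∈ {x | ∃ H : SimpleGraph ((Fin m ⊕ Fin n) × Fin k),
      IsFullDPCover (completeBipartiteGraph (Fin m) (Fin n)) k H ∧ x = dpCount k H},
      x ≤ properCount (completeBipartiteGraph (Fin m) (Fin n)) k := by
    rintro x ⟨H, hH, rfl⟩
    exact dpCount_le m n k H hH
  exact le_antisymm (csSup_le ⟨_, hmem⟩ hub) (le_csSup ⟨_, hub⟩ hmem)
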